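/- If there exists a continuum which has span zero and is not chainable, then there exists a metrizable continuum which has span zero and is not chainable. -/

import Mathlib

open Set Topology Filter
set_option linter.unusedSectionVars false
set_option maxHeartbeats 1000000

/-- A continuum `X` is chainable if every finite open cover has a finite open
refinement that can be enumerated as `V_0, …, V_{n-1}` with
`V_i ∩ V_j ≠ ∅` iff `|i - j| ≤ 1`. -/
def Chainable (X : Type*) [TopologicalSpace X] : Prop :=
  ∀ U : Finset (Set X), (∀ u ∈ U, IsOpen u) → ⋃₀ (U : Set (Set X)) = Set.univ →
    ∃ (n : ℕ) (V : Fin n → Set X),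
      (∀ i, IsOpen (V i)) ∧ (⋃ i, V i) = Set.univ ∧
      (∀ i, ∃ u ∈ U, V i ⊆ u) ∧
      ∀ i j : Fin n, (V i ∩ V j).Nonempty ↔ |((i : ℕ) : ℤ) - ((j : ℕ) : ℤ)| ≤ 1

/-- A continuum has span zero if every subcontinuum `Z` of `X × X` with
`π₁[Z] = π₂[Z]` meets the diagonal. -/
def SpanZero (X : Type*) [TopologicalSpace X] : Prop :=
  ∀ Z : Set (X × X), IsClosed Z → IsConnected Z →
    Prod.fst '' Z = Prod.snd '' Z → ∃ x : X, (x, x) ∈ Z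


section LimSet

variable {ι : Type*} {C : Type*} [TopologicalSpace C]

/-- Ultrafilter limit of a family of sets. -/
def limSet (U : Ultrafilter ι) (A : ι → Set C) : Set C :=
  {z | ∀ N ∈ 𝓝 z, {i | (A i ∩ N).Nonempty} ∈ U}

theorem limSet_isClosed (U : Ultrafilter ι) (A : ι → Set C) : IsClosed (limSet U A) := by
  rw [← isOpen_compl_iff]
  rw [isOpen_iff_mem_nhds]
  intro z hz
  simp only [mem_compl_iff, limSet, mem_setOf_eq, not_forall] at hz
  obtain ⟨N, hN, hNU⟩ := hz
  obtain ⟨O, hON, hO, hzO⟩ := mem_nhds_iff.1 hN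
  filter_upwards [hO.mem_nhds hzO] with w hw
  simp only [mem_compl_iff, limSet, mem_setOf_eq, not_forall]
  refine ⟨N, mem_nhds_iff.2 ⟨O, hON, hO, hw⟩, hNU⟩

theorem mem_limSet_of_tendsto (U : Ultrafilter ι) (A : ι → Set C) {z : ι → C} {w : C}
    (hz : ∀ᶠ i in (U : Filter ι), z i ∈ A i) (hw : Tendsto z (U : Filter ι) (𝓝 w)) :
    w ∈ limSet U A := by
  intro N hN
  have h2 : {i | z i ∈ N} ∈ (U : Filter ι) := hw hN
  filter_upwards [hz, h2] with i h1 h2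
  exact ⟨z i, h1, h2⟩

variable [CompactSpace C]

theorem exists_ultrafilter_limit (U : Ultrafilter ι) (z : ι → C) :
    ∃ w, Tendsto z (U : Filter ι) (𝓝 w) := by
  obtain ⟨w, -, hw⟩ := isCompact_univ.ultrafilter_le_nhds (U.map z)
    (by simp [le_principal_iff])
  exact ⟨w, hw⟩

theorem limSet_nonempty [Nonempty C] (U : Ultrafilter ι) (A : ι → Set C)
    (hA : ∀ᶠ i in (U : Filter ι), (A i).Nonempty) : (limSet U A).Nonempty := by
  classical
  choose! z hz using fun i (h : (A i).Nonempty) => h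
  obtain ⟨w, hw⟩ := exists_ultrafilter_limit U z
  exact ⟨w, mem_limSet_of_tendsto U A (hA.mono fun i hi => hz i hi) hw⟩

theorem limSet_subset {K : Set C} (hK : IsClosed K) (U : Ultrafilter ι) (A : ι → Set C)
    (hA : ∀ᶠ i in (U : Filter ι), A i ⊆ K) : limSet U A ⊆ K := by
  intro z hz
  by_contra hzK
  have : Kᶜ ∈ 𝓝 z := hK.isOpen_compl.mem_nhds hzK
  have h1 := hz _ this
  have : {i | (A i ∩ Kᶜ).Nonempty} ∩ {i | A i ⊆ K} ∈ (U : Filter ι) := inter_mem h1 hA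
  obtain ⟨i, ⟨x, hx1, hx2⟩, hi2⟩ := (U.nonempty_of_mem this)
  exact hx2 (hi2 hx1)

theorem limSet_mono_ae (U : Ultrafilter ι) {A B : ι → Set C}
    (h : ∀ᶠ i in (U : Filter ι), A i ⊆ B i) : limSet U A ⊆ limSet U B := by
  intro z hz N hN
  filter_upwards [hz N hN, h] with i ⟨x, hx1, hx2⟩ hAB
  exact ⟨x, hAB hx1, hx2⟩

/-- If `U`-often `A i` meets `M`, then the limit meets the closure of `M`. -/
theorem limSet_meets [Nonempty C] (U : Ultrafilter ι) (A : ι → Set C) {M : Set C}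
    (h : ∀ᶠ i in (U : Filter ι), (A i ∩ M).Nonempty) :
    (limSet U A ∩ closure M).Nonempty := by
  classical
  choose! z hz using fun i (hi : (A i ∩ M).Nonempty) => hi
  obtain ⟨w, hw⟩ := exists_ultrafilter_limit U z
  refine ⟨w, mem_limSet_of_tendsto U A (h.mono fun i hi => (hz i hi).1) hw, ?_⟩
  exact isClosed_closure.mem_of_tendsto hw
    (h.mono fun i hi => subset_closure (hz i hi).2)

/-- Eventually the family is inside any open neighborhood of the limit. -/
theorem limSet_eventually_subset [Nonempty C] (U : Ultrafilter ι) (A : ι → Set C) {W : Set C}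
    (hW : IsOpen W) (h : limSet U A ⊆ W) :
    ∀ᶠ i in (U : Filter ι), A i ⊆ W := by
  classical
  by_contra hcon
  rw [Filter.not_eventually] at hcon
  have hcon' : ∀ᶠ i in (U : Filter ι), ¬ A i ⊆ W :=
    (Ultrafilter.frequently_iff_eventually ..).1 hcon
  choose! z hz using fun i (hi : ¬ A i ⊆ W) => not_subset.1 hi
  obtain ⟨w, hw⟩ := exists_ultrafilter_limit U z
  have hw1 : w ∈ limSet U A :=
    mem_limSet_of_tendsto U A (hcon'.mono (fun i hi => (hz i hi).1)) hw
  have hw2 : w ∈ Wᶜ := hW.isClosed_compl.mem_of_tendsto hw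
    (hcon'.mono fun i hi => (hz i hi).2)
  exact hw2 (h hw1)

end LimSet
section FnSep
variable {X : Type*} [TopologicalSpace X] [CompactSpace X] [T2Space X]

/-- Two points are `(S, ε)`-close if every function in `S` moves them by less than `ε`. -/
def sClose (S : Finset C(X, ℝ)) (ε : ℝ) (x y : X) : Prop := ∀ f ∈ S, |f x - f y| < ε

theorem sClose_refl {S : Finset C(X, ℝ)} {ε : ℝ} (hε : 0 < ε) (x : X) : sClose S ε x x := by
  intro f _; simpa using hε

theorem sClose_symm {S : Finset C(X, ℝ)} {ε : ℝ} {x y : X} (h : sClose S ε x y) :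
    sClose S ε y x := by
  intro f hf; rw [abs_sub_comm]; exact h f hf

theorem sClose_mono {S S' : Finset C(X, ℝ)} {ε ε' : ℝ} (hS : S' ⊆ S) (hε : ε ≤ ε')
    {x y : X} (h : sClose S ε x y) : sClose S' ε' x y := fun f hf => lt_of_lt_of_le (h f (hS hf)) hε

theorem sClose_trans {S : Finset C(X, ℝ)} {a b : ℝ} {x y z : X} (h1 : sClose S a x y)
    (h2 : sClose S b y z) : sClose S (a + b) x z := by
  intro f hf
  calc |f x - f z| ≤ |f x - f y| + |f y - f z| := abs_sub_le _ _ _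
    _ < a + b := add_lt_add (h1 f hf) (h2 f hf)

theorem isOpen_sClose_ball (S : Finset C(X, ℝ)) (ε : ℝ) (x : X) :
    IsOpen {y | sClose S ε x y} := by
  have : {y | sClose S ε x y} = ⋂ f ∈ S, {y | |f x - f y| < ε} := by
    ext y; simp [sClose]
  rw [this]
  refine isOpen_biInter_finset fun f _ => ?_
  have : Continuous fun y => |f x - f y| := (continuous_const.sub f.continuous).abs
  exact isOpen_lt this continuous_const

/-- Neighborhood basis via a single continuous function. -/
theorem exists_fn_nbhd {x : X} {U : Set X} (hU : IsOpen U) (hx : x ∈ U) :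
    ∃ f : C(X, ℝ), ∀ y, |f x - f y| < 1 → y ∈ U := by
  obtain ⟨f, hf0, hf1, -⟩ := exists_continuous_zero_one_of_isClosed
    (isClosed_singleton (x := x)) (hU.isClosed_compl) (by simp [Set.disjoint_left, hx])
  refine ⟨f, fun y hy => ?_⟩
  by_contra hyU
  have h1 : f x = 0 := hf0 rfl
  have h2 : f y = 1 := hf1 hyU
  rw [h1, h2] at hy
  norm_num at hy

/-- `(S,ε)`-closeness for pairs: both coordinates are close. -/
def pClose (S : Finset C(X, ℝ)) (ε : ℝ) (p q : X × X) : Prop :=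
  sClose S ε p.1 q.1 ∧ sClose S ε p.2 q.2

theorem pClose_refl {S : Finset C(X, ℝ)} {ε : ℝ} (hε : 0 < ε) (p : X × X) : pClose S ε p p :=
  ⟨sClose_refl hε _, sClose_refl hε _⟩

theorem pClose_symm {S : Finset C(X, ℝ)} {ε : ℝ} {p q : X × X} (h : pClose S ε p q) :
    pClose S ε q p := ⟨sClose_symm h.1, sClose_symm h.2⟩

theorem pClose_mono {S S' : Finset C(X, ℝ)} {ε ε' : ℝ} (hS : S' ⊆ S) (hε : ε ≤ ε')
    {p q : X × X} (h : pClose S ε p q) : pClose S' ε' p q :=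
  ⟨sClose_mono hS hε h.1, sClose_mono hS hε h.2⟩

theorem pClose_trans {S : Finset C(X, ℝ)} {a b : ℝ} {p q r : X × X} (h1 : pClose S a p q)
    (h2 : pClose S b q r) : pClose S (a + b) p r :=
  ⟨sClose_trans h1.1 h2.1, sClose_trans h1.2 h2.2⟩

theorem isOpen_pClose_ball (S : Finset C(X, ℝ)) (ε : ℝ) (p : X × X) :
    IsOpen {q | pClose S ε p q} := by
  have : {q : X × X | pClose S ε p q} =
      (Prod.fst ⁻¹' {y | sClose S ε p.1 y}) ∩ (Prod.snd ⁻¹' {y | sClose S ε p.2 y}) := rfl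
  rw [this]
  exact ((isOpen_sClose_ball S ε p.1).preimage continuous_fst).inter
    ((isOpen_sClose_ball S ε p.2).preimage continuous_snd)

theorem exists_fn_nbhd_pair {p : X × X} {W : Set (X × X)} (hW : IsOpen W) (hp : p ∈ W) :
    ∃ S : Finset C(X, ℝ), ∀ q, pClose S 1 p q → q ∈ W := by
  classical
  obtain ⟨U, V, hU, hV, hpU, hpV, hUVW⟩ := isOpen_prod_iff.1 hW p.1 p.2 hp
  obtain ⟨f, hf⟩ := exists_fn_nbhd hU hpU
  obtain ⟨g, hg⟩ := exists_fn_nbhd hV hpV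
  refine ⟨{f, g}, fun q hq => ?_⟩
  have h1 : q.1 ∈ U := hf q.1 (hq.1 f (by simp))
  have h2 : q.2 ∈ V := hg q.2 (hq.2 g (by simp))
  exact hUVW ⟨h1, h2⟩

/-- Uniform separation of disjoint compacta in `X × X` by finitely many functions. -/
theorem exists_fn_separation {F G : Set (X × X)} (hF : IsCompact F) (hG : IsClosed G)
    (hd : Disjoint F G) :
    ∃ S : Finset C(X, ℝ), ∀ p ∈ F, ∀ q ∈ G, ¬ pClose S (1/2) p q := by
  classical
  have key : ∀ p ∈ F, ∃ S : Finset C(X, ℝ), ∀ q ∈ G, ¬ pClose S 1 p q := by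
    intro p hp
    obtain ⟨S, hS⟩ := exists_fn_nbhd_pair hG.isOpen_compl (Set.disjoint_left.1 hd hp)
    exact ⟨S, fun q hq hpq => (hS q hpq) hq⟩
  choose! Sp hSp using key
  have hcov : F ⊆ ⋃ p ∈ F, {r | pClose (Sp p) (1/2) p r} := by
    intro r hr
    exact Set.mem_biUnion hr (pClose_refl (by norm_num) r)
  obtain ⟨t, htF, htfin, hcov'⟩ := hF.elim_finite_subcover_image
    (fun p (_ : p ∈ F) => isOpen_pClose_ball (Sp p) (1/2) p) hcov
  refine ⟨htfin.toFinset.sup (fun p => Sp p), fun p hp q hq hpq => ?_⟩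
  obtain ⟨p', hp', hpp'⟩ := Set.mem_iUnion₂.1 (hcov' hp)
  have hsub : Sp p' ⊆ htfin.toFinset.sup (fun p => Sp p) :=
    Finset.le_sup (f := fun p => Sp p) (htfin.mem_toFinset.2 hp')
  have h1 : pClose (Sp p') (1/2) p q := pClose_mono hsub le_rfl hpq
  have h2 : pClose (Sp p') 1 p' q := by
    have := pClose_trans hpp' h1
    norm_num at this
    exact this
  exact hSp p' (htF hp') q hq h2

end FnSep

section MainLemma

variable {X : Type*} [TopologicalSpace X] [CompactSpace X] [T2Space X]

attribute [local instance] Classical.propDecidable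

/-- `(S,ε)`-chains inside `L`. -/
def Chained (S : Finset C(X, ℝ)) (ε : ℝ) (L : Set (X × X)) : X × X → X × X → Prop :=
  Relation.ReflTransGen (fun a b => b ∈ L ∧ pClose S ε a b)

/-- `L` is an `(S,ε)`-approximate witness against span zero, relative to `K`. -/
def Good (S : Finset C(X, ℝ)) (ε : ℝ) (K L : Set (X × X)) : Prop :=
  L.Nonempty ∧ L ⊆ K ∧
  (∀ p ∈ L, ∀ q ∈ L, Chained S ε L p q) ∧
  (∀ p ∈ L, ∃ q ∈ L, sClose S ε p.1 q.2) ∧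
  (∀ p ∈ L, ∃ q ∈ L, sClose S ε p.2 q.1)

theorem eps_pos (m : ℕ) : (0 : ℝ) < 1 / (m + 1) := by positivity

theorem eps_le {m n : ℕ} (h : m ≤ n) : (1 : ℝ) / (n + 1) ≤ 1 / (m + 1) := by
  have hm : (0:ℝ) < m + 1 := by positivity
  have h' : (m:ℝ) ≤ n := Nat.cast_le.2 h
  exact one_div_le_one_div_of_le hm (by linarith)

/-- Crossing lemma for chains. -/
theorem chain_cross {α : Type*} {u' v' W : Set α} (hW : W ⊆ u' ∪ v') (hdisj : u' ∩ v' = ∅)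
    {R : α → α → Prop} {p q : α}
    (h : Relation.ReflTransGen (fun a b => b ∈ W ∧ R a b) p q)
    (hp : p ∈ u') (hq : q ∈ v') : ∃ a b, a ∈ u' ∧ b ∈ v' ∧ R a b := by
  induction h using Relation.ReflTransGen.head_induction_on with
  | refl => exact absurd (Set.mem_inter hp hq) (by simp [hdisj])
  | head hstep hchain ih =>
    rename_i a c
    rcases hW hstep.1 with hc | hc
    · exact ih hc
    · exact ⟨a, c, hp, hc, hstep.2⟩

section LimTransfer

variable (U : Ultrafilter (Finset C(X, ℝ) × ℕ))

/-- Projection of an ultrafilter limit of sets in a product. -/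
theorem fst_limSet [Nonempty X] {A : (Finset C(X, ℝ) × ℕ) → Set (X × X)} :
    Prod.fst '' limSet U A = limSet U (fun i => Prod.fst '' A i) := by
  apply Set.Subset.antisymm
  · rintro x ⟨z, hz, rfl⟩ N hN
    have : Prod.fst ⁻¹' N ∈ 𝓝 z := continuous_fst.continuousAt.preimage_mem_nhds hN
    filter_upwards [hz _ this] with i ⟨w, hw1, hw2⟩
    exact ⟨w.1, ⟨w, hw1, rfl⟩, hw2⟩
  · intro x hx
    by_contra hcon
    have hne : ∀ y : X, (x, y) ∉ limSet U A := by
      intro y hy; exact hcon ⟨(x, y), hy, rfl⟩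
    have hsub : ({x} ×ˢ (univ : Set X)) ⊆ (limSet U A)ᶜ := by
      rintro ⟨a, b⟩ ⟨ha, -⟩
      simp only [mem_singleton_iff] at ha; subst ha
      exact hne b
    obtain ⟨u, v, hu, hv, hxu, hvuniv, huv⟩ := generalized_tube_lemma isCompact_singleton
      isCompact_univ (limSet_isClosed U A).isOpen_compl hsub
    have hxu' : x ∈ u := hxu rfl
    -- regularity: closed nbhd inside u
    obtain ⟨N', hN'mem, hN'c, hN'u⟩ : ∃ N' ∈ 𝓝 x, IsClosed N' ∧ N' ⊆ u := by
      rcases (closed_nhds_basis x).mem_iff.1 (hu.mem_nhds hxu') with ⟨N', ⟨hmem, hcl⟩, hsub⟩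
      exact ⟨N', hmem, hcl, hsub⟩
    have hint : interior N' ∈ 𝓝 x := interior_mem_nhds.2 hN'mem
    have hmeet : ∀ᶠ i in (U : Filter _), ((fun i => Prod.fst '' A i) i ∩ interior N').Nonempty :=
      hx _ hint
    have hmeet' : ∀ᶠ i in (U : Filter _), (A i ∩ (Prod.fst ⁻¹' interior N')).Nonempty := by
      filter_upwards [hmeet] with i hi
      obtain ⟨w, hw1, hw2⟩ := hi
      obtain ⟨z, hz, hzw⟩ := hw1
      exact ⟨z, hz, by rw [Set.mem_preimage, hzw]; exact hw2⟩
    obtain ⟨z, hz1, hz2⟩ := limSet_meets U A hmeet'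
    have : z.1 ∈ N' := by
      have h1 : closure (Prod.fst ⁻¹' interior N') ⊆ Prod.fst ⁻¹' closure (interior N') :=
        Continuous.closure_preimage_subset (continuous_fst : Continuous (Prod.fst : X × X → X)) _
      have h2 : closure (interior N') ⊆ N' := by
        nth_rewrite 2 [← hN'c.closure_eq]
        exact closure_mono interior_subset
      exact h2 (h1 hz2)
    exact huv ⟨hN'u this, hvuniv trivial⟩ hz1

end LimTransfer

theorem image_limSet_subset {C C' : Type*} [TopologicalSpace C] [TopologicalSpace C']
    {ι : Type*} (U : Ultrafilter ι) {f : C → C'} (hf : Continuous f) (A : ι → Set C) :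
    f '' limSet U A ⊆ limSet U (fun i => f '' A i) := by
  rintro _ ⟨z, hz, rfl⟩ N hN
  filter_upwards [hz _ (hf.continuousAt.preimage_mem_nhds hN)] with i hi
  obtain ⟨w, hw1, hw2⟩ := hi
  exact ⟨f w, ⟨w, hw1, rfl⟩, hw2⟩

theorem homeomorph_limSet {C C' : Type*} [TopologicalSpace C] [TopologicalSpace C']
    {ι : Type*} (U : Ultrafilter ι) (e : C ≃ₜ C') (A : ι → Set C) :
    e '' limSet U A = limSet U (fun i => e '' A i) := by
  apply Set.Subset.antisymm (image_limSet_subset U e.continuous A)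
  intro z hz
  have h2 := image_limSet_subset U e.symm.continuous (fun i => e '' A i) ⟨z, hz, rfl⟩
  have heq : (fun i => e.symm '' (e '' A i)) = A := by
    funext i; rw [Set.image_image]; simp
  rw [heq] at h2
  exact ⟨e.symm z, h2, by simp⟩

section LimTransfer2

variable (U : Ultrafilter (Finset C(X, ℝ) × ℕ))

theorem snd_limSet [Nonempty X] {A : (Finset C(X, ℝ) × ℕ) → Set (X × X)} :
    Prod.snd '' limSet U A = limSet U (fun i => Prod.snd '' A i) := by
  have hswap := homeomorph_limSet U (Homeomorph.prodComm X X) A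
  have h1 : Prod.snd '' limSet U A = Prod.fst '' ((Homeomorph.prodComm X X) '' limSet U A) := by
    rw [Set.image_image]; rfl
  rw [h1, hswap, fst_limSet]
  have h3 : (fun i => Prod.fst '' ((Homeomorph.prodComm X X) '' A i)) =
      fun i => Prod.snd '' A i := by
    funext i; rw [Set.image_image]; rfl
  rw [h3]

theorem limSet_transfer (hU : (U : Filter (Finset C(X, ℝ) × ℕ)) ≤ atTop) {D E : Finset C(X, ℝ) × ℕ → Set X}
    (hDE : ∀ i : Finset C(X, ℝ) × ℕ, ∀ d ∈ D i, ∃ e ∈ E i, sClose i.1 (1/(i.2+1)) d e) :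
    limSet U D ⊆ limSet U E := by
  intro x hx N hN
  obtain ⟨O, hON, hO, hxO⟩ := mem_nhds_iff.1 hN
  obtain ⟨f, hf⟩ := exists_fn_nbhd hO hxO
  set S₀ : Finset C(X, ℝ) := {f} with hS₀
  have hball : {y | sClose S₀ (1/2) x y} ∈ 𝓝 x :=
    (isOpen_sClose_ball S₀ (1/2) x).mem_nhds (sClose_refl (by norm_num) x)
  have h1 := hx _ hball
  have h2 : ∀ᶠ i in (U : Filter (Finset C(X, ℝ) × ℕ)), (S₀, 1) ≤ i :=
    hU (Filter.eventually_atTop.2 ⟨(S₀, 1), fun b hb => hb⟩)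
  filter_upwards [h1, h2] with i hi1 hi2
  obtain ⟨d, hd1, hd2⟩ := hi1
  obtain ⟨e, he1, he2⟩ := hDE i d hd1
  obtain ⟨hS', hm'⟩ := Prod.mk_le_mk.1 hi2
  have hε : (1:ℝ)/(i.2+1) ≤ 1/2 := le_trans (eps_le hm') (by norm_num)
  have h3 : sClose S₀ (1/2) d e := sClose_mono hS' hε he2
  have h4 : sClose S₀ 1 x e := by
    have h5 := sClose_trans hd2 h3
    norm_num at h5
    exact h5
  exact ⟨e, he1, hON (hf e (h4 f (by simp [hS₀])))⟩

end LimTransfer2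

/-- The main compactness lemma: in a compact Hausdorff space with span zero, every closed
subset of `X × X` disjoint from the diagonal admits a finite "killer" certificate. -/
theorem main_compactness (hspan : SpanZero X) {K : Set (X × X)} (hK : IsClosed K)
    (hKd : ∀ x : X, (x, x) ∉ K) :
    ∃ (S : Finset C(X, ℝ)) (m : ℕ), ∀ L, ¬ Good S ((1:ℝ)/(m+1)) K L := by
  by_contra hcon
  push_neg at hcon
  choose A hA using hcon
  haveI : Nonempty (Finset C(X, ℝ) × ℕ) := ⟨(∅, 0)⟩
  set U : Ultrafilter (Finset C(X, ℝ) × ℕ) := Ultrafilter.of atTop with hUdef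
  have hUle : (U : Filter (Finset C(X, ℝ) × ℕ)) ≤ atTop := Ultrafilter.of_le _
  set A' : Finset C(X, ℝ) × ℕ → Set (X × X) := fun i => A i.1 i.2 with hA'def
  have hGood : ∀ i : Finset C(X, ℝ) × ℕ, Good i.1 ((1:ℝ)/(i.2+1)) K (A' i) :=
    fun i => hA i.1 i.2
  obtain ⟨p₀, -⟩ := (hGood (∅, 0)).1
  haveI hXne : Nonempty X := ⟨p₀.1⟩
  set Z := limSet U A' with hZdef
  have hZcl : IsClosed Z := limSet_isClosed U A'
  have hZne : Z.Nonempty := limSet_nonempty U A' (Eventually.of_forall fun i => (hGood i).1)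
  have hZK : Z ⊆ K := limSet_subset hK U A' (Eventually.of_forall fun i => (hGood i).2.1)
  have hproj : Prod.fst '' Z = Prod.snd '' Z := by
    rw [hZdef, fst_limSet, snd_limSet]
    apply Set.Subset.antisymm
    · refine limSet_transfer U hUle (fun i d hd => ?_)
      obtain ⟨p, hp, hpd⟩ := hd
      obtain ⟨q, hq, hq2⟩ := (hGood i).2.2.2.1 p hp
      subst hpd
      exact ⟨q.2, ⟨q, hq, rfl⟩, hq2⟩
    · refine limSet_transfer U hUle (fun i d hd => ?_)
      obtain ⟨p, hp, hpd⟩ := hd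
      obtain ⟨q, hq, hq2⟩ := (hGood i).2.2.2.2 p hp
      subst hpd
      exact ⟨q.1, ⟨q, hq, rfl⟩, hq2⟩
  have hZconn : IsPreconnected Z := by
    intro u v hu hv hcover hZu hZv
    by_contra hne
    rw [Set.not_nonempty_iff_eq_empty] at hne
    set P : Set (X × X) := Z ∩ vᶜ with hPdef
    set Q : Set (X × X) := Z ∩ uᶜ with hQdef
    have hPcl : IsClosed P := hZcl.inter hv.isClosed_compl
    have hQcl : IsClosed Q := hZcl.inter hu.isClosed_compl
    have hZuP : Z ∩ u ⊆ P := by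
      rintro z ⟨hz, hzu⟩
      refine ⟨hz, fun hzv => ?_⟩
      have : z ∈ Z ∩ (u ∩ v) := ⟨hz, hzu, hzv⟩
      rw [hne] at this
      exact this
    have hZvQ : Z ∩ v ⊆ Q := by
      rintro z ⟨hz, hzv⟩
      refine ⟨hz, fun hzu => ?_⟩
      have : z ∈ Z ∩ (u ∩ v) := ⟨hz, hzu, hzv⟩
      rw [hne] at this
      exact this
    have hPu : P ⊆ u := by
      rintro z ⟨hz, hzv⟩
      rcases hcover hz with h | h
      · exact h
      · exact absurd h hzv
    have hQv : Q ⊆ v := by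
      rintro z ⟨hz, hzu⟩
      rcases hcover hz with h | h
      · exact absurd h hzu
      · exact h
    have hPQ : Disjoint P Q := by
      rw [Set.disjoint_left]
      rintro z ⟨hz, hzv⟩ ⟨-, hzu⟩
      rcases hcover hz with h | h
      · exact hzu h
      · exact hzv h
    obtain ⟨S₁, hS₁⟩ := exists_fn_separation hPcl.isCompact hQcl hPQ
    set u' : Set (X × X) := ⋃ p ∈ P, {r | pClose S₁ (1/8) p r} with hu'def
    set v' : Set (X × X) := ⋃ p ∈ Q, {r | pClose S₁ (1/8) p r} with hv'def
    have hu'o : IsOpen u' := isOpen_biUnion fun p _ => isOpen_pClose_ball S₁ (1/8) p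
    have hv'o : IsOpen v' := isOpen_biUnion fun p _ => isOpen_pClose_ball S₁ (1/8) p
    have hPu' : P ⊆ u' := fun p hp => Set.mem_biUnion hp (pClose_refl (by norm_num) p)
    have hQv' : Q ⊆ v' := fun p hp => Set.mem_biUnion hp (pClose_refl (by norm_num) p)
    have hdisj : u' ∩ v' = ∅ := by
      rw [Set.eq_empty_iff_forall_notMem]
      rintro r ⟨hr1, hr2⟩
      obtain ⟨p, hp, hpr⟩ := Set.mem_iUnion₂.1 hr1
      obtain ⟨q, hq, hqr⟩ := Set.mem_iUnion₂.1 hr2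
      have h14 : pClose S₁ (1/8 + 1/8) p q := pClose_trans hpr (pClose_symm hqr)
      exact hS₁ p hp q hq (pClose_mono (le_refl S₁) (by norm_num) h14)
    have hgap : ∀ r ∈ u', ∀ s ∈ v', ¬ pClose S₁ (1/8) r s := by
      rintro r hr s hs hrs
      obtain ⟨p, hp, hpr⟩ := Set.mem_iUnion₂.1 hr
      obtain ⟨q, hq, hqs⟩ := Set.mem_iUnion₂.1 hs
      have h38 : pClose S₁ (1/8 + 1/8 + 1/8) p q :=
        pClose_trans (pClose_trans hpr hrs) (pClose_symm hqs)
      exact hS₁ p hp q hq (pClose_mono (le_refl S₁) (by norm_num) h38)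
    have hWsub : Z ⊆ u' ∪ v' := by
      intro z hz
      rcases hcover hz with h | h
      · exact Or.inl (hPu' (hZuP ⟨hz, h⟩))
      · exact Or.inr (hQv' (hZvQ ⟨hz, h⟩))
    have E1 : ∀ᶠ i in (U : Filter (Finset C(X, ℝ) × ℕ)), A' i ⊆ u' ∪ v' :=
      limSet_eventually_subset U A' (hu'o.union hv'o) hWsub
    obtain ⟨z₁, hz₁⟩ := hZu
    obtain ⟨z₂, hz₂⟩ := hZv
    have E2 : ∀ᶠ i in (U : Filter (Finset C(X, ℝ) × ℕ)), (A' i ∩ u').Nonempty :=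
      hz₁.1 _ (hu'o.mem_nhds (hPu' (hZuP hz₁)))
    have E3 : ∀ᶠ i in (U : Filter (Finset C(X, ℝ) × ℕ)), (A' i ∩ v').Nonempty :=
      hz₂.1 _ (hv'o.mem_nhds (hQv' (hZvQ hz₂)))
    have E4 : ∀ᶠ i in (U : Filter (Finset C(X, ℝ) × ℕ)), (S₁, 8) ≤ i :=
      hUle (Filter.eventually_atTop.2 ⟨(S₁, 8), fun b hb => hb⟩)
    obtain ⟨i, hi1, hi2, hi3, hi4⟩ := (E1.and (E2.and (E3.and E4))).exists
    obtain ⟨a, haA, hau⟩ := hi2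
    obtain ⟨b, hbA, hbv⟩ := hi3
    have hchain : Chained i.1 ((1:ℝ)/(i.2+1)) (A' i) a b := (hGood i).2.2.1 a haA b hbA
    obtain ⟨a', b', ha', hb', hab⟩ := chain_cross hi1 hdisj hchain hau hbv
    obtain ⟨hS', hm'⟩ := Prod.mk_le_mk.1 hi4
    have hε : (1:ℝ)/(i.2+1) ≤ 1/8 := le_trans (eps_le hm') (by norm_num)
    exact hgap a' ha' b' hb' (pClose_mono hS' hε hab)
  obtain ⟨x, hx⟩ := hspan Z hZcl ⟨hZne, hZconn⟩ hproj
  exact hKd x (hZK hx)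

end MainLemma

section Construction

variable {X : Type*} [TopologicalSpace X] [CompactSpace X] [T2Space X]

attribute [local instance] Classical.propDecidable

/-- The "distance at least `1/(j+1)` in some coordinate of `T`" set. -/
def Koff (T : Finset C(X, ℝ)) (j : ℕ) : Set (X × X) :=
  {p | ∃ f ∈ T, (1:ℝ)/(j+1) ≤ |f p.1 - f p.2|}

theorem Koff_closed (T : Finset C(X, ℝ)) (j : ℕ) : IsClosed (Koff T j) := by
  have : Koff T j = ⋃ f ∈ T, {p : X × X | (1:ℝ)/(j+1) ≤ |f p.1 - f p.2|} := by
    ext p; simp [Koff]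
  rw [this]
  refine Set.Finite.isClosed_biUnion (T.finite_toSet) (fun f _ => ?_)
  have hc : Continuous fun p : X × X => |f p.1 - f p.2| :=
    ((f.continuous.comp continuous_fst).sub (f.continuous.comp continuous_snd)).abs
  exact isClosed_le continuous_const hc

theorem Koff_off_diag (T : Finset C(X, ℝ)) (j : ℕ) (x : X) : (x, x) ∉ Koff T j := by
  rintro ⟨f, -, hf⟩
  simp only [sub_self, abs_zero] at hf
  exact absurd hf (not_le.2 (by positivity))

/-- The countable family of continuous functions, closed under taking killers. -/
theorem exists_closed_family (hspan : SpanZero X) (G₀ : Finset C(X, ℝ)) :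
    ∃ G : Set C(X, ℝ), G.Countable ∧ G.Nonempty ∧ ↑G₀ ⊆ G ∧
      ∀ T : Finset C(X, ℝ), ↑T ⊆ G → ∀ j : ℕ,
        ∃ (S : Finset C(X, ℝ)) (m : ℕ), ↑S ⊆ G ∧
          ∀ L, ¬ Good S ((1:ℝ)/(m+1)) (Koff T j) L := by
  classical
  -- killers via the main lemma
  have hk : ∀ (T : Finset C(X, ℝ)) (j : ℕ), ∃ (S : Finset C(X, ℝ)) (m : ℕ),
      ∀ L, ¬ Good S ((1:ℝ)/(m+1)) (Koff T j) L := fun T j =>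
    main_compactness hspan (Koff_closed T j) (Koff_off_diag T j)
  choose kS km hkill using hk
  -- iterate
  let Gs : ℕ → Set C(X, ℝ) := fun t => Nat.rec (↑G₀ ∪ {0}) (fun _ Gt =>
    Gt ∪ ⋃ T ∈ {T : Finset C(X, ℝ) | ↑T ⊆ Gt}, ⋃ j : ℕ, ↑(kS T j)) t
  have hGs0 : Gs 0 = ↑G₀ ∪ {0} := rfl
  have hGsS : ∀ t, Gs (t+1) = Gs t ∪
      ⋃ T ∈ {T : Finset C(X, ℝ) | ↑T ⊆ Gs t}, ⋃ j : ℕ, ↑(kS T j) := fun t => rfl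
  have hmono : Monotone Gs := monotone_nat_of_le_succ (fun t => by
    rw [hGsS t]; exact Set.subset_union_left)
  have hcount : ∀ t, (Gs t).Countable := by
    intro t
    induction t with
    | zero => exact (G₀.finite_toSet.union (Set.finite_singleton 0)).countable
    | succ t ih =>
      rw [hGsS t]
      refine ih.union (Set.Countable.biUnion ?_ (fun T _ => ?_))
      · have h1 : {T : Finset C(X, ℝ) | ↑T ⊆ Gs t} ⊆
            (fun T : Finset C(X, ℝ) => (↑T : Set C(X, ℝ))) ⁻¹'
              {s | s.Finite ∧ s ⊆ Gs t} := by
          intro T hT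
          exact ⟨T.finite_toSet, hT⟩
        exact Set.Countable.mono h1
          ((countable_setOf_finite_subset ih).preimage Finset.coe_injective)
      · exact Set.countable_iUnion (fun j => (kS T j).countable_toSet)
  refine ⟨⋃ t, Gs t, Set.countable_iUnion hcount, ⟨0, Set.mem_iUnion.2 ⟨0, Or.inr rfl⟩⟩,
    (Set.subset_union_left).trans (Set.subset_iUnion Gs 0), ?_⟩
  intro T hT j
  -- T is contained in some stage
  have hstage : ∃ t, ↑T ⊆ Gs t := by
    induction T using Finset.induction with
    | empty => exact ⟨0, by simp⟩
    | insert f T' hnotmem ih =>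
      have hf : (f : C(X, ℝ)) ∈ ⋃ t, Gs t := hT (by simp)
      have hT' : ↑T' ⊆ ⋃ t, Gs t := by
        refine Set.Subset.trans ?_ hT
        intro g hg; simp only [Finset.coe_insert, Set.mem_insert_iff]; exact Or.inr hg
      obtain ⟨t1, ht1⟩ := Set.mem_iUnion.1 hf
      obtain ⟨t2, ht2⟩ := ih hT'
      refine ⟨max t1 t2, ?_⟩
      intro g hg
      rcases Finset.mem_insert.1 (by exact_mod_cast hg) with h | h
      · subst h; exact hmono (le_max_left t1 t2) ht1
      · exact hmono (le_max_right t1 t2) (ht2 (by exact_mod_cast h))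
  obtain ⟨t, ht⟩ := hstage
  refine ⟨kS T j, km T j, ?_, hkill T j⟩
  have : ↑(kS T j) ⊆ Gs (t+1) := by
    rw [hGsS t]
    refine Set.subset_union_right.trans' ?_
    intro g hg
    exact Set.mem_biUnion ht (Set.mem_iUnion.2 ⟨j, hg⟩)
  exact this.trans (Set.subset_iUnion Gs (t+1))

end Construction

section Cover

variable {X : Type*} [TopologicalSpace X] [CompactSpace X] [T2Space X]

/-- Subordinate positive functions for a finite open cover. -/
theorem exists_cover_functions (U₀ : Finset (Set X)) (hop : ∀ u ∈ U₀, IsOpen u)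
    (hcov : ⋃₀ (U₀ : Set (Set X)) = Set.univ) :
    ∃ g : Set X → C(X, ℝ), (∀ u ∈ U₀, ∀ x, 0 < g u x → x ∈ u) ∧
      (∀ x : X, ∃ u ∈ U₀, 0 < g u x) := by
  classical
  -- shrink
  have husub : (Set.univ : Set X) ⊆ ⋃ i : ↥U₀, (i : Set X) := by
    intro x _
    have : x ∈ ⋃₀ (U₀ : Set (Set X)) := by rw [hcov]; trivial
    obtain ⟨u, hu, hxu⟩ := this
    exact Set.mem_iUnion.2 ⟨⟨u, hu⟩, hxu⟩
  obtain ⟨v, hvcov, hvop, hvcl⟩ := exists_subset_iUnion_closure_subset isClosed_univ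
    (fun i : ↥U₀ => hop i i.2) (fun x _ => Set.toFinite _) husub
  -- Urysohn
  have hury : ∀ i : ↥U₀, ∃ g : C(X, ℝ), (∀ x, 0 < g x → x ∈ (i : Set X)) ∧
      ∀ x ∈ v i, g x = 1 := by
    intro i
    obtain ⟨f, hf0, hf1, -⟩ := exists_continuous_zero_one_of_isClosed
      isClosed_closure (hop i i.2).isClosed_compl
      (by rw [Set.disjoint_compl_right_iff_subset]; exact hvcl i)
    refine ⟨ContinuousMap.const X 1 - f, fun x hx => ?_, fun x hx => ?_⟩
    · simp only [ContinuousMap.sub_apply, ContinuousMap.const_apply] at hx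
      by_contra hxu
      rw [hf1 hxu] at hx
      norm_num at hx
    · simp only [ContinuousMap.sub_apply, ContinuousMap.const_apply]
      rw [hf0 (subset_closure hx)]
      norm_num
  choose gg hgg1 hgg2 using hury
  refine ⟨fun u => if h : u ∈ U₀ then gg ⟨u, h⟩ else 0, fun u hu x hx => ?_, fun x => ?_⟩
  · dsimp only at hx
    rw [dif_pos hu] at hx
    exact hgg1 ⟨u, hu⟩ x hx
  · obtain ⟨i, hi⟩ := Set.mem_iUnion.1 (hvcov (Set.mem_univ x))
    refine ⟨i, i.2, ?_⟩
    dsimp only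
    rw [dif_pos i.2]
    have := hgg2 i x hi
    rw [Subtype.coe_eta, this]
    norm_num

end Cover

section ChainTransfer

/-- Pulling back a chain cover along a continuous surjection. -/
theorem chainable_pullback {X Y : Type*} [TopologicalSpace X] [TopologicalSpace Y]
    {f : X → Y} (hc : Continuous f) (hs : Function.Surjective f)
    (hY : Chainable Y) (U₀ : Finset (Set X)) (W : Finset (Set Y))
    (hWo : ∀ w ∈ W, IsOpen w) (hWc : ⋃₀ (W : Set (Set Y)) = Set.univ)
    (hWU : ∀ w ∈ W, ∃ u ∈ U₀, f ⁻¹' w ⊆ u) :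
    ∃ (n : ℕ) (V : Fin n → Set X),
      (∀ i, IsOpen (V i)) ∧ (⋃ i, V i) = Set.univ ∧
      (∀ i, ∃ u ∈ U₀, V i ⊆ u) ∧
      ∀ i j : Fin n, (V i ∩ V j).Nonempty ↔ |((i : ℕ) : ℤ) - ((j : ℕ) : ℤ)| ≤ 1 := by
  obtain ⟨n, V, hVo, hVc, hVsub, hVpat⟩ := hY W hWo hWc
  refine ⟨n, fun i => f ⁻¹' (V i), fun i => (hVo i).preimage hc, ?_, ?_, ?_⟩
  · rw [← Set.preimage_iUnion, hVc, Set.preimage_univ]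
  · intro i
    obtain ⟨w, hw, hVw⟩ := hVsub i
    obtain ⟨u, hu, hwu⟩ := hWU w hw
    exact ⟨u, hu, (Set.preimage_mono hVw).trans hwu⟩
  · intro i j
    rw [← hVpat i j]
    constructor
    · rintro ⟨x, hx1, hx2⟩
      exact ⟨f x, hx1, hx2⟩
    · rintro ⟨y, hy1, hy2⟩
      obtain ⟨x, rfl⟩ := hs y
      exact ⟨x, hy1, hy2⟩

end ChainTransfer

section Final

attribute [local instance] Classical.propDecidable

theorem final_construction {X : Type u} [TopologicalSpace X] [CompactSpace X] [T2Space X]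
    [ConnectedSpace X] (hspan : SpanZero X) (hnc : ¬ Chainable X) :
    ∃ (Y : Type) (_ : TopologicalSpace Y),
      TopologicalSpace.MetrizableSpace Y ∧
      CompactSpace Y ∧ T2Space Y ∧ ConnectedSpace Y ∧ SpanZero Y ∧ ¬ Chainable Y := by
  classical
  -- a bad cover
  unfold Chainable at hnc
  push_neg at hnc
  obtain ⟨U₀, hU₀o, hU₀c, hU₀no⟩ := hnc
  -- subordinate functions
  obtain ⟨g, hg1, hg2⟩ := exists_cover_functions U₀ hU₀o hU₀c
  -- the countable closed family
  obtain ⟨G, hGc, hGne, hG₀G, hGclosed⟩ := exists_closed_family hspan (U₀.image g)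
  obtain ⟨F, hF⟩ := hGc.exists_eq_range hGne
  -- the metrizable quotient
  set e : X → (ℕ → ℝ) := fun x n => F n x with hedef
  have hecont : Continuous e := continuous_pi fun n => (F n).continuous
  set Y : Set (ℕ → ℝ) := Set.range e with hYdef
  set e' : X → ↥Y := Set.rangeFactorization e with he'def
  have he'c : Continuous e' := hecont.subtype_mk _
  have he's : Function.Surjective e' := Set.rangeFactorization_surjective
  haveI hYcomp : CompactSpace ↥Y := isCompact_iff_compactSpace.mp (isCompact_range hecont)
  haveI hYconn : ConnectedSpace ↥Y := Subtype.connectedSpace (isConnected_range hecont)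
  have hval : ∀ (x : X) (n : ℕ), (e' x : ℕ → ℝ) n = F n x := fun x n => rfl
  refine ⟨↥Y, inferInstance, inferInstance, hYcomp, inferInstance, hYconn, ?_, ?_⟩
  · -- SpanZero Y
    intro Z hZcl hZconn hZproj
    by_contra hnod
    push_neg at hnod
    have hZne : Z.Nonempty := hZconn.nonempty
    have hZcomp : IsCompact Z := hZcl.isCompact
    -- separation indices
    have hsep : ∀ z : ↥Y × ↥Y, z ∈ Z → ∃ n : ℕ, (z.1 : ℕ → ℝ) n ≠ (z.2 : ℕ → ℝ) n := by
      intro z hz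
      have hne : z.1 ≠ z.2 := by
        intro h
        apply hnod z.2
        have hzz : (z.1, z.2) = z := Prod.mk.eta
        rw [h] at hzz
        rw [hzz]
        exact hz
      have : (z.1 : ℕ → ℝ) ≠ (z.2 : ℕ → ℝ) := fun h => hne (Subtype.coe_injective h)
      exact Function.ne_iff.1 this
    choose! nn hnn using hsep
    set d : ↥Y × ↥Y → ℝ := fun z => |(z.1 : ℕ → ℝ) (nn z) - (z.2 : ℕ → ℝ) (nn z)| with hddef
    have hdpos : ∀ z ∈ Z, 0 < d z := fun z hz => abs_pos.2 (sub_ne_zero.2 (hnn z hz))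
    set O : ↥Y × ↥Y → Set (↥Y × ↥Y) := fun z =>
      {w | d z / 2 < |(w.1 : ℕ → ℝ) (nn z) - (w.2 : ℕ → ℝ) (nn z)|} with hOdef
    have hOopen : ∀ z, IsOpen (O z) := by
      intro z
      have hc : Continuous fun w : ↥Y × ↥Y =>
          |(w.1 : ℕ → ℝ) (nn z) - (w.2 : ℕ → ℝ) (nn z)| := by
        apply Continuous.abs
        exact (((continuous_apply (nn z)).comp (continuous_subtype_val.comp continuous_fst)).sub
          ((continuous_apply (nn z)).comp (continuous_subtype_val.comp continuous_snd)))
      exact isOpen_lt continuous_const hc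
    have hOmem : ∀ z ∈ Z, z ∈ O z := fun z hz => half_lt_self (hdpos z hz)
    obtain ⟨t, htZ, htfin, htcov⟩ := hZcomp.elim_finite_subcover_image
      (fun z (_ : z ∈ Z) => hOopen z) (fun z hz => Set.mem_biUnion hz (hOmem z hz))
    have htne : t.Nonempty := by
      obtain ⟨z₀, hz₀⟩ := hZne
      obtain ⟨zw, hzw, -⟩ := Set.mem_iUnion₂.1 (htcov hz₀)
      exact ⟨zw, hzw⟩
    have htfne : htfin.toFinset.Nonempty := by
      obtain ⟨zw, hzw⟩ := htne
      exact ⟨zw, htfin.mem_toFinset.2 hzw⟩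
    set cmin : ℝ := htfin.toFinset.inf' htfne (fun z => d z / 2) with hcmindef
    have hcminpos : 0 < cmin := by
      rw [hcmindef, Finset.lt_inf'_iff]
      intro z hz
      exact half_pos (hdpos z (htZ (htfin.mem_toFinset.1 hz)))
    obtain ⟨j, hj⟩ := exists_nat_one_div_lt hcminpos
    set T : Finset C(X, ℝ) := htfin.toFinset.image (fun z => F (nn z)) with hTdef
    have hTsub : ↑T ⊆ G := by
      intro f hf
      obtain ⟨z, -, rfl⟩ := Finset.mem_image.1 (by exact_mod_cast hf)
      rw [hF]
      exact ⟨nn z, rfl⟩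
    -- the lifted witness is Good for the killer, contradiction
    obtain ⟨S', m', hS'G, hkill⟩ := hGclosed T hTsub j
    set ε' : ℝ := (1:ℝ)/(m'+1) with hε'def
    have hε'pos : 0 < ε' := eps_pos m'
    set L : Set (X × X) := {p | (e' p.1, e' p.2) ∈ Z} with hLdef
    have hLK : L ⊆ Koff T j := by
      intro p hp
      obtain ⟨z, hzt, hzO⟩ := Set.mem_iUnion₂.1 (htcov hp)
      refine ⟨F (nn z), by
        exact_mod_cast Finset.mem_image_of_mem _ (htfin.mem_toFinset.2 hzt), ?_⟩
      have h1 : d z / 2 < |F (nn z) p.1 - F (nn z) p.2| := hzO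
      have h2 : cmin ≤ d z / 2 := Finset.inf'_le _ (htfin.mem_toFinset.2 hzt)
      have h3 : (1:ℝ)/(j+1) < cmin := hj
      linarith
    -- indices for the killer functions
    have hνex : ∀ f : C(X, ℝ), f ∈ S' → ∃ k, F k = f := by
      intro f hf
      have : f ∈ G := hS'G hf
      rw [hF] at this
      exact this
    choose! ν hν using hνex
    -- chains in Z
    set D : (↥Y × ↥Y) → (↥Y × ↥Y) → Prop := fun w w' => w' ∈ Z ∧
      ∀ f ∈ S', |(w.1 : ℕ → ℝ) (ν f) - (w'.1 : ℕ → ℝ) (ν f)| < ε' ∧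
                |(w.2 : ℕ → ℝ) (ν f) - (w'.2 : ℕ → ℝ) (ν f)| < ε' with hDdef
    set ball : (↥Y × ↥Y) → Set (↥Y × ↥Y) := fun w =>
      {w' | ∀ f ∈ S', |(w.1 : ℕ → ℝ) (ν f) - (w'.1 : ℕ → ℝ) (ν f)| < ε' ∧
                      |(w.2 : ℕ → ℝ) (ν f) - (w'.2 : ℕ → ℝ) (ν f)| < ε'} with hballdef
    have hballopen : ∀ w, IsOpen (ball w) := by
      intro w
      have : ball w = ⋂ f ∈ S',
          ({w' : ↥Y × ↥Y | |(w.1 : ℕ → ℝ) (ν f) - (w'.1 : ℕ → ℝ) (ν f)| < ε'} ∩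
           {w' : ↥Y × ↥Y | |(w.2 : ℕ → ℝ) (ν f) - (w'.2 : ℕ → ℝ) (ν f)| < ε'}) := by
        ext w'
        simp only [hballdef, Set.mem_setOf_eq, Set.mem_iInter, Set.mem_inter_iff]
      rw [this]
      refine isOpen_biInter_finset fun f _ => IsOpen.inter ?_ ?_
      · exact isOpen_lt (Continuous.abs ((continuous_const).sub
          ((continuous_apply (ν f)).comp (continuous_subtype_val.comp continuous_fst))))
          continuous_const
      · exact isOpen_lt (Continuous.abs ((continuous_const).sub
          ((continuous_apply (ν f)).comp (continuous_subtype_val.comp continuous_snd))))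
          continuous_const
    have hballmem : ∀ w, w ∈ ball w := by
      intro w f hf
      constructor <;> · rw [sub_self, abs_zero]; exact hε'pos
    have hZchain : ∀ w ∈ Z, ∀ w' ∈ Z, Relation.ReflTransGen D w w' := by
      intro w hw
      set c : Set (↥Y × ↥Y) := {w' | w' ∈ Z ∧ Relation.ReflTransGen D w w'} with hcdef
      by_cases hcZ : ∀ w' ∈ Z, w' ∈ c
      · exact fun w' hw' => (hcZ w' hw').2
      exfalso
      push_neg at hcZ
      obtain ⟨w₂, hw₂Z, hw₂c⟩ := hcZ
      set Aop : Set (↥Y × ↥Y) := ⋃ w' ∈ c, ball w' with hAdef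
      set Bop : Set (↥Y × ↥Y) := ⋃ w' ∈ {w'' | w'' ∈ Z ∧ w'' ∉ c}, ball w' with hBdef
      have hAo : IsOpen Aop := isOpen_biUnion fun w' _ => hballopen w'
      have hBo : IsOpen Bop := isOpen_biUnion fun w' _ => hballopen w'
      have hsub : Z ⊆ Aop ∪ Bop := by
        intro w' hw'
        by_cases h : w' ∈ c
        · exact Or.inl (Set.mem_biUnion h (hballmem w'))
        · exact Or.inr (Set.mem_biUnion ⟨hw', h⟩ (hballmem w'))
      have hAne : (Z ∩ Aop).Nonempty :=
        ⟨w, hw, Set.mem_biUnion ⟨hw, Relation.ReflTransGen.refl⟩ (hballmem w)⟩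
      have hBne : (Z ∩ Bop).Nonempty :=
        ⟨w₂, hw₂Z, Set.mem_biUnion ⟨hw₂Z, hw₂c⟩ (hballmem w₂)⟩
      obtain ⟨w₃, hw₃Z, hw₃A, hw₃B⟩ := hZconn.2 Aop Bop hAo hBo hsub hAne hBne
      obtain ⟨w1, hw1c, hw1b⟩ := Set.mem_iUnion₂.1 hw₃A
      obtain ⟨w2, hw2m, hw2b⟩ := Set.mem_iUnion₂.1 hw₃B
      have hw₃c : Relation.ReflTransGen D w w₃ :=
        hw1c.2.tail ⟨hw₃Z, fun f hf => (hw1b f hf)⟩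
      have : w2 ∈ c := by
        refine ⟨hw2m.1, hw₃c.tail ⟨hw2m.1, fun f hf => ?_⟩⟩
        obtain ⟨h1, h2⟩ := hw2b f hf
        rw [abs_sub_comm] at h1 h2
        exact ⟨h1, h2⟩
      exact hw2m.2 this
    -- lifting chains to L
    have hlift : ∀ p, p ∈ L → ∀ w', Relation.ReflTransGen D (e' p.1, e' p.2) w' →
        ∀ q : X × X, (e' q.1, e' q.2) = w' → Chained S' ε' L p q := by
      intro p hpL w' h
      induction h with
      | refl =>
        intro q hq
        have hqL : q ∈ L := by rw [hLdef, Set.mem_setOf_eq, hq]; exact hpL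
        refine Relation.ReflTransGen.single ⟨hqL, ?_, ?_⟩
        · intro f hf
          have h1 : f p.1 = (e' p.1 : ℕ → ℝ) (ν f) := by rw [hval, hν f hf]
          have h2 : f q.1 = (e' q.1 : ℕ → ℝ) (ν f) := by rw [hval, hν f hf]
          rw [h1, h2, show e' q.1 = (e' p.1, e' p.2).1 from congrArg Prod.fst hq]
          rw [sub_self, abs_zero]; exact hε'pos
        · intro f hf
          have h1 : f p.2 = (e' p.2 : ℕ → ℝ) (ν f) := by rw [hval, hν f hf]
          have h2 : f q.2 = (e' q.2 : ℕ → ℝ) (ν f) := by rw [hval, hν f hf]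
          rw [h1, h2, show e' q.2 = (e' p.1, e' p.2).2 from congrArg Prod.snd hq]
          rw [sub_self, abs_zero]; exact hε'pos
      | tail hRT hstep ih =>
        rename_i b w'
        intro q hq
        obtain ⟨a1, ha1⟩ := he's b.1
        obtain ⟨a2, ha2⟩ := he's b.2
        have hbZ : b ∈ Z := by
          rcases Relation.ReflTransGen.cases_tail hRT with h | ⟨c', -, hc'⟩
          · rw [h]; exact hpL
          · exact hc'.1
        have hrL : (a1, a2) ∈ L := by
          rw [hLdef, Set.mem_setOf_eq]
          simp only [ha1, ha2]
          rwa [Prod.mk.eta]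
        have hqZ : w' ∈ Z := hstep.1
        have hqL : q ∈ L := by rw [hLdef, Set.mem_setOf_eq, hq]; exact hqZ
        refine (ih (a1, a2) (by simp only [ha1, ha2])).tail ⟨hqL, ?_, ?_⟩
        · intro f hf
          have h1 : f a1 = (b.1 : ℕ → ℝ) (ν f) := by rw [← ha1, hval, hν f hf]
          have h2 : f q.1 = (w'.1 : ℕ → ℝ) (ν f) := by
            rw [← hq]
            show f q.1 = (e' q.1 : ℕ → ℝ) (ν f)
            rw [hval, hν f hf]
          rw [h1, h2]
          exact (hstep.2 f hf).1
        · intro f hf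
          have h1 : f a2 = (b.2 : ℕ → ℝ) (ν f) := by rw [← ha2, hval, hν f hf]
          have h2 : f q.2 = (w'.2 : ℕ → ℝ) (ν f) := by
            rw [← hq]
            show f q.2 = (e' q.2 : ℕ → ℝ) (ν f)
            rw [hval, hν f hf]
          rw [h1, h2]
          exact (hstep.2 f hf).2
    -- L is Good
    refine hkill L ⟨?_, hLK, ?_, ?_, ?_⟩
    · obtain ⟨z, hz⟩ := hZne
      obtain ⟨x1, hx1⟩ := he's z.1
      obtain ⟨x2, hx2⟩ := he's z.2
      refine ⟨(x1, x2), ?_⟩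
      rw [hLdef, Set.mem_setOf_eq]
      simp only [hx1, hx2]
      rwa [Prod.mk.eta]
    · intro p hp q hq
      exact hlift p hp _ (hZchain _ hp _ hq) q rfl
    · intro p hp
      have h1 : e' p.1 ∈ Prod.fst '' Z := ⟨(e' p.1, e' p.2), hp, rfl⟩
      rw [hZproj] at h1
      obtain ⟨w, hwZ, hw2⟩ := h1
      obtain ⟨a, ha⟩ := he's w.1
      refine ⟨(a, p.1), ?_, ?_⟩
      · show (e' a, e' p.1) ∈ Z
        rw [ha, ← hw2, Prod.mk.eta]
        exact hwZ
      · exact sClose_refl hε'pos p.1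
    · intro p hp
      have h1 : e' p.2 ∈ Prod.snd '' Z := ⟨(e' p.1, e' p.2), hp, rfl⟩
      rw [← hZproj] at h1
      obtain ⟨w, hwZ, hw1⟩ := h1
      obtain ⟨a, ha⟩ := he's w.2
      refine ⟨(p.2, a), ?_, ?_⟩
      · show (e' p.2, e' a) ∈ Z
        rw [ha, ← hw1, Prod.mk.eta]
        exact hwZ
      · exact sClose_refl hε'pos p.2
  · -- not chainable
    intro hY
    -- indices for the cover functions
    have hidx : ∀ u : Set X, u ∈ U₀ → ∃ k, F k = g u := by
      intro u hu
      have : g u ∈ G := hG₀G (by exact_mod_cast Finset.mem_image_of_mem g hu)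
      rw [hF] at this
      exact this
    choose! idx hidxF using hidx
    set W : Finset (Set ↥Y) :=
      U₀.image (fun u => {y : ↥Y | 0 < (y : ℕ → ℝ) (idx u)}) with hWdef
    have hWo : ∀ w ∈ W, IsOpen w := by
      intro w hw
      obtain ⟨u, -, rfl⟩ := Finset.mem_image.1 hw
      exact isOpen_lt continuous_const ((continuous_apply (idx u)).comp continuous_subtype_val)
    have hWc : ⋃₀ (W : Set (Set ↥Y)) = Set.univ := by
      apply Set.eq_univ_of_forall
      intro y
      obtain ⟨x, rfl⟩ := he's y
      obtain ⟨u, hu, hgu⟩ := hg2 x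
      refine ⟨{y : ↥Y | 0 < (y : ℕ → ℝ) (idx u)}, ?_, ?_⟩
      · exact_mod_cast Finset.mem_image_of_mem _ hu
      · show (0:ℝ) < (e' x : ℕ → ℝ) (idx u)
        rw [hval, hidxF u hu]
        exact hgu
    have hWU : ∀ w ∈ W, ∃ u ∈ U₀, e' ⁻¹' w ⊆ u := by
      intro w hw
      obtain ⟨u, hu, rfl⟩ := Finset.mem_image.1 hw
      refine ⟨u, hu, fun x hx => ?_⟩
      apply hg1 u hu
      have : (0:ℝ) < (e' x : ℕ → ℝ) (idx u) := hx
      rwa [hval, hidxF u hu] at this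
    obtain ⟨n, V, h1, h2, h3, h4⟩ := chainable_pullback he'c he's hY U₀ W hWo hWc hWU
    obtain ⟨i, j, hbad⟩ := hU₀no n V h1 h2 h3
    rcases hbad with ⟨hne, hgt⟩ | ⟨hempty, hle⟩
    · exact absurd ((h4 i j).1 hne) (not_le.2 hgt)
    · obtain ⟨x, hx⟩ := (h4 i j).2 hle
      rw [hempty] at hx
      exact hx

end Final

theorem nonmetric_to_metric_counterexample_8 :
    (∃ (X : Type u) (_ : TopologicalSpace X),
      CompactSpace X ∧ T2Space X ∧ ConnectedSpace X ∧ SpanZero X ∧ ¬ Chainable X) →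
    ∃ (Y : Type) (_ : TopologicalSpace Y),
      TopologicalSpace.MetrizableSpace Y ∧
      CompactSpace Y ∧ T2Space Y ∧ ConnectedSpace Y ∧ SpanZero Y ∧ ¬ Chainable Y := by
  rintro ⟨X, tX, hcomp, ht2, hconn, hspan, hnc⟩
  exact final_construction hspan hnc
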